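/- Let 𝕋² = ℝ²/ℤ² with Haar probability measure ν, and let T₁, T₂ : 𝕋² → 𝕋² be the toral automorphisms induced by the matrices [[1,2],[0,1]] and [[1,0],[2,1]] in SL(2,ℤ). Define G on L²(𝕋², ν) by (Gf)(x) = (1/4)(f(T₁x) + f(T₁⁻¹x) + f(T₂x) + f(T₂⁻¹x)). Then for every f ∈ L²(𝕋², ν) with ∫ f dν = 0, ‖Gf‖_{L²} ≤ (√3/2)·‖f‖_{L²}; that is, the operator norm of G restricted to the zero-mean subspace L²₀(𝕋², ν) is at most √3/2. -/

import Mathlib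

open MeasureTheory

instance : Fact ((0:ℝ) < 1) := ⟨one_pos⟩

instance : IsProbabilityMeasure (volume : Measure (AddCircle (1:ℝ))) :=
  ⟨by simp [AddCircle.measure_univ]⟩

/-- The flat two-dimensional torus `𝕋² = ℝ²/ℤ²`, realized as a product of two copies of
the additive circle `ℝ/ℤ`; its `volume` is the Haar probability measure. -/
abbrev Torus2 : Type := AddCircle (1:ℝ) × AddCircle (1:ℝ)

/-- The toral automorphism induced by the matrix `[[1,2],[0,1]] ∈ SL(2,ℤ)`. -/
noncomputable def torusT1 (p : Torus2) : Torus2 := (p.1 + (2:ℤ) • p.2, p.2)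

/-- The toral automorphism induced by the matrix `[[1,0],[2,1]] ∈ SL(2,ℤ)`. -/
noncomputable def torusT2 (p : Torus2) : Torus2 := (p.1, (2:ℤ) • p.1 + p.2)

/-- The toral automorphism induced by `[[1,2],[0,1]]⁻¹ = [[1,−2],[0,1]]`. -/
noncomputable def torusT1inv (p : Torus2) : Torus2 := (p.1 - (2:ℤ) • p.2, p.2)

/-- The toral automorphism induced by `[[1,0],[2,1]]⁻¹ = [[1,0],[−2,1]]`. -/
noncomputable def torusT2inv (p : Torus2) : Torus2 := (p.1, p.2 - (2:ℤ) • p.1)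

/-- The Margulis graphexon operator on the torus. -/
noncomputable def margulisG (f : Torus2 → ℝ) (x : Torus2) : ℝ :=
  (1 / 4) * (f (torusT1 x) + f (torusT1inv x) + f (torusT2 x) + f (torusT2inv x))

section S1
namespace Mrg
noncomputable section

lemma mp_swap : MeasurePreserving (Prod.swap : Torus2 → Torus2) volume volume := by
  rw [Measure.volume_eq_prod]; exact Measure.measurePreserving_swap

lemma mpT2 : MeasurePreserving torusT2 (volume : Measure Torus2) volume := by
  rw [Measure.volume_eq_prod]
  have : torusT2 = fun p : Torus2 => (id p.1, (2:ℤ) • p.1 + p.2) := rfl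
  rw [this]
  exact (MeasurePreserving.id volume).skew_product
    (by fun_prop)
    (Filter.Eventually.of_forall fun x => (measurePreserving_add_left volume ((2:ℤ) • x)).map_eq)

lemma mpT2inv : MeasurePreserving torusT2inv (volume : Measure Torus2) volume := by
  rw [Measure.volume_eq_prod]
  have : torusT2inv = fun p : Torus2 => (id p.1, (-((2:ℤ) • p.1)) + p.2) := by
    funext p; simp [torusT2inv, sub_eq_neg_add]
  rw [this]
  exact (MeasurePreserving.id volume).skew_product (g := fun x y => (-((2:ℤ) • x)) + y)
    (by fun_prop)
    (Filter.Eventually.of_forall fun x => (measurePreserving_add_left volume _).map_eq)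

lemma mpT1 : MeasurePreserving torusT1 (volume : Measure Torus2) volume := by
  have h : torusT1 = Prod.swap ∘ torusT2 ∘ (Prod.swap : Torus2 → Torus2) := by
    funext p; simp [torusT1, torusT2, add_comm]
  rw [h]
  exact mp_swap.comp (mpT2.comp mp_swap)

lemma mpT1inv : MeasurePreserving torusT1inv (volume : Measure Torus2) volume := by
  have h : torusT1inv = Prod.swap ∘ torusT2inv ∘ (Prod.swap : Torus2 → Torus2) := by
    funext p; simp [torusT1inv, torusT2inv]
  rw [h]
  exact mp_swap.comp (mpT2inv.comp mp_swap)

/-- 2D Fourier character. -/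
def eT (k : ℤ × ℤ) : C(Torus2, ℂ) :=
  ((fourier k.1).comp ⟨Prod.fst, continuous_fst⟩) * ((fourier k.2).comp ⟨Prod.snd, continuous_snd⟩)

lemma eT_apply (k : ℤ × ℤ) (p : Torus2) : eT k p = fourier k.1 p.1 * fourier k.2 p.2 := rfl

lemma fourier_arg_add {m : ℤ} {x y : AddCircle (1:ℝ)} :
    fourier m (x + y) = fourier m x * fourier m y := by
  simp only [fourier_apply, smul_add]
  rw [AddCircle.toCircle_add]; simp

lemma fourier_zsmul {m c : ℤ} {y : AddCircle (1:ℝ)} :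
    fourier m (c • y) = fourier (c * m) y := by
  simp only [fourier_apply, smul_smul]
  rw [mul_comm]

end
end Mrg

end S1
section S2
open MeasureTheory Submodule Set
namespace Mrg
noncomputable section

/-- The four dual maps on frequencies. -/
def sA (k : ℤ × ℤ) : ℤ × ℤ := (k.1, k.2 + 2 * k.1)
def sA' (k : ℤ × ℤ) : ℤ × ℤ := (k.1, k.2 - 2 * k.1)
def sB (k : ℤ × ℤ) : ℤ × ℤ := (k.1 + 2 * k.2, k.2)
def sB' (k : ℤ × ℤ) : ℤ × ℤ := (k.1 - 2 * k.2, k.2)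

lemma eT_T1 (k : ℤ × ℤ) (p : Torus2) : eT k (torusT1 p) = eT (sA k) p := by
  simp only [eT_apply, torusT1, sA, fourier_arg_add, fourier_zsmul, ← fourier_add]
  ring_nf
  rw [fourier_add]
  ring

lemma eT_T1inv (k : ℤ × ℤ) (p : Torus2) : eT k (torusT1inv p) = eT (sA' k) p := by
  have : torusT1inv p = (p.1 + ((-2 : ℤ) • p.2), p.2) := by
    simp [torusT1inv, sub_eq_add_neg, neg_smul]
  simp only [eT_apply, this, sA', fourier_arg_add, fourier_zsmul, ← fourier_add]
  ring_nf
  rw [fourier_add]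
  ring

lemma eT_T2 (k : ℤ × ℤ) (p : Torus2) : eT k (torusT2 p) = eT (sB k) p := by
  simp only [eT_apply, torusT2, sB, fourier_arg_add, fourier_zsmul, ← fourier_add]
  ring_nf
  rw [fourier_add]
  ring

lemma eT_T2inv (k : ℤ × ℤ) (p : Torus2) : eT k (torusT2inv p) = eT (sB' k) p := by
  have : torusT2inv p = (p.1, p.2 + ((-2 : ℤ) • p.1)) := by
    simp [torusT2inv, sub_eq_add_neg, neg_smul]
  simp only [eT_apply, this, sB', fourier_arg_add, fourier_zsmul, ← fourier_add]
  ring_nf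
  rw [fourier_add]
  ring

end
end Mrg
end S2
section S3
open MeasureTheory Submodule Set ContinuousMap
open scoped ComplexConjugate
namespace Mrg
noncomputable section

lemma vol1_eq : (volume : Measure (AddCircle (1:ℝ))) = AddCircle.haarAddCircle := by
  rw [AddCircle.volume_eq_smul_haarAddCircle]; simp

lemma eT_mul (k l : ℤ × ℤ) : eT k * eT l = eT (k + l) := by
  ext p
  simp only [ContinuousMap.mul_apply, eT_apply, Prod.fst_add, Prod.snd_add, fourier_add]
  ring

lemma eT_zero : eT 0 = 1 := by
  ext p
  simp [eT_apply, fourier_zero]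

lemma eT_conj (k : ℤ × ℤ) (p : Torus2) : conj (eT k p) = eT (-k) p := by
  simp only [eT_apply, map_mul, Prod.fst_neg, Prod.snd_neg, ← fourier_neg]

/-- The star subalgebra generated by the 2D Fourier characters. -/
def eTalg : StarSubalgebra ℂ C(Torus2, ℂ) where
  toSubalgebra := Algebra.adjoin ℂ (range eT)
  star_mem' := by
    show Algebra.adjoin ℂ (range eT) ≤ star (Algebra.adjoin ℂ (range eT))
    refine Algebra.adjoin_le ?_
    rintro - ⟨k, rfl⟩
    refine Algebra.subset_adjoin ⟨-k, ?_⟩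
    ext p
    exact (eT_conj k p).symm

lemma eTalg_coe : Subalgebra.toSubmodule eTalg.toSubalgebra = span ℂ (range eT) := by
  apply Algebra.adjoin_eq_span_of_subset
  refine Subset.trans ?_ Submodule.subset_span
  intro x hx
  refine Submonoid.closure_induction (fun _ => id) ⟨0, eT_zero⟩ ?_ hx
  rintro - - - - ⟨k, rfl⟩ ⟨l, rfl⟩
  exact ⟨k + l, (eT_mul k l).symm⟩

lemma eTalg_separatesPoints : eTalg.SeparatesPoints := by
  intro p q hpq
  have h1 : p.1 ≠ q.1 ∨ p.2 ≠ q.2 := by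
    by_contra h
    push_neg at h
    exact hpq (Prod.ext h.1 h.2)
  rcases h1 with h | h
  · refine ⟨_, ⟨eT (1, 0), Algebra.subset_adjoin ⟨(1, 0), rfl⟩, rfl⟩, ?_⟩
    simp only [eT_apply, fourier_zero, mul_one, fourier_one]
    intro hc
    rw [Circle.coe_inj] at hc
    exact h (AddCircle.injective_toCircle one_ne_zero hc)
  · refine ⟨_, ⟨eT (0, 1), Algebra.subset_adjoin ⟨(0, 1), rfl⟩, rfl⟩, ?_⟩
    simp only [eT_apply, fourier_zero, one_mul, fourier_one]
    intro hc
    rw [Circle.coe_inj] at hc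
    exact h (AddCircle.injective_toCircle one_ne_zero hc)

lemma span_eT_closure_eq_top : (span ℂ (range eT)).topologicalClosure = ⊤ := by
  rw [← eTalg_coe]
  exact congr_arg (Subalgebra.toSubmodule <| StarSubalgebra.toSubalgebra ·)
    (ContinuousMap.starSubalgebra_topologicalClosure_eq_top_of_separatesPoints eTalg
      eTalg_separatesPoints)

/-- The 2D Fourier characters as elements of L². -/
def eL (k : ℤ × ℤ) : Lp ℂ 2 (volume : Measure Torus2) :=
  ContinuousMap.toLp (E := ℂ) 2 volume ℂ (eT k)

lemma coeFn_eL (k : ℤ × ℤ) : eL k =ᵐ[(volume : Measure Torus2)] eT k :=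
  ContinuousMap.coeFn_toLp volume (eT k)

lemma span_eL_closure_eq_top :
    (span ℂ (range eL)).topologicalClosure = ⊤ := by
  convert
    (ContinuousMap.toLp_denseRange ℂ (volume : Measure Torus2) ℂ (by norm_num : (2:ENNReal) ≠ ⊤)).topologicalClosure_map_submodule
      span_eT_closure_eq_top
  · rfl
  erw [map_span, range_comp]
  simp only [ContinuousLinearMap.coe_coe]

lemma oneD_int (m n : ℤ) :
    (∫ x : AddCircle (1:ℝ), conj (fourier m x) * fourier n x) = if m = n then 1 else 0 := by
  have h := @orthonormal_fourier 1 ⟨one_pos⟩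
  rw [orthonormal_iff_ite] at h
  have := h m n
  rw [ContinuousMap.inner_toLp AddCircle.haarAddCircle (fourier m) (fourier n), ← vol1_eq] at this
  simpa only [mul_comm] using this

lemma orthonormal_eL : Orthonormal ℂ eL := by
  rw [orthonormal_iff_ite]
  intro i j
  rw [eL, eL, ContinuousMap.inner_toLp (volume : Measure Torus2) (eT i) (eT j)]
  simp only [mul_comm (eT j _) _]
  have : ∀ p : Torus2, conj (eT i p) * eT j p
      = (fun x => conj (fourier i.1 x) * fourier j.1 x) p.1
        * (fun y => conj (fourier i.2 y) * fourier j.2 y) p.2 := by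
    intro p
    simp only [eT_apply, map_mul]
    ring
  calc ∫ p : Torus2, conj (eT i p) * eT j p
      = ∫ p : Torus2, (fun x => conj (fourier i.1 x) * fourier j.1 x) p.1
        * (fun y => conj (fourier i.2 y) * fourier j.2 y) p.2 := by
        exact integral_congr_ae (Filter.Eventually.of_forall this)
    _ = (∫ x : AddCircle (1:ℝ), conj (fourier i.1 x) * fourier j.1 x)
        * ∫ y : AddCircle (1:ℝ), conj (fourier i.2 y) * fourier j.2 y := by
        rw [Measure.volume_eq_prod]
        exact integral_prod_mul (L := ℂ) (fun x => conj (fourier i.1 x) * fourier j.1 x) (fun y => conj (fourier i.2 y) * fourier j.2 y)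
    _ = (if i.1 = j.1 then 1 else 0) * (if i.2 = j.2 then 1 else 0) := by
        rw [oneD_int, oneD_int]
    _ = if i = j then 1 else 0 := by
        rcases eq_or_ne i j with rfl | hij
        · simp
        · have h2 : i.1 ≠ j.1 ∨ i.2 ≠ j.2 := by
            by_contra hc
            push_neg at hc
            exact hij (Prod.ext hc.1 hc.2)
          rcases h2 with h | h <;> simp [h, hij]

/-- The 2D Fourier Hilbert basis of `L²(𝕋²)`. -/
def torusBasis : HilbertBasis (ℤ × ℤ) ℂ (Lp ℂ 2 (volume : Measure Torus2)) :=
  HilbertBasis.mk orthonormal_eL span_eL_closure_eq_top.ge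

lemma torusBasis_coe : ⇑torusBasis = eL := HilbertBasis.coe_mk _ _

end
end Mrg
end S3
section S4
open MeasureTheory Submodule Set
open scoped ENNReal
open scoped ComplexConjugate
namespace Mrg
noncomputable section

lemma norm_eT (k : ℤ × ℤ) (p : Torus2) : ‖eT k p‖ = 1 := by
  rw [eT_apply, norm_mul]
  simp only [fourier_apply, Circle.norm_coe, mul_one]

lemma inner_eL_eq (k : ℤ × ℤ) (G : Torus2 → ℂ) (hG : MemLp G 2 (volume : Measure Torus2)) :
    (inner ℂ (eL k) (hG.toLp G) : ℂ) = ∫ p : Torus2, conj (eT k p) * G p := by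
  rw [MeasureTheory.L2.inner_def]
  apply integral_congr_ae
  filter_upwards [coeFn_eL k, hG.coeFn_toLp] with p h1 h2
  rw [h1, h2, RCLike.inner_apply']

lemma parseval_summable (g : Lp ℂ 2 (volume : Measure Torus2)) :
    Summable (fun k : ℤ × ℤ => ‖(inner ℂ (eL k) g : ℂ)‖ ^ 2) := by
  have h1 : ∀ k, ‖(inner ℂ (eL k) g : ℂ)‖ ^ 2 = ‖torusBasis.repr g k‖ ^ (2:ℝ≥0∞).toReal := by
    intro k
    rw [torusBasis.repr_apply_apply g k]
    norm_num
    rw [congrFun torusBasis_coe.symm k]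
  have h2 := lp.memℓp (torusBasis.repr g)
  rw [memℓp_gen_iff (by norm_num : (0:ℝ) < (2:ℝ≥0∞).toReal)] at h2
  exact (summable_congr h1).mpr h2

lemma parseval_eq (g : Lp ℂ 2 (volume : Measure Torus2)) :
    ∑' k : ℤ × ℤ, ‖(inner ℂ (eL k) g : ℂ)‖ ^ 2 = ‖g‖ ^ 2 := by
  have h1 : ∀ k, ‖(inner ℂ (eL k) g : ℂ)‖ ^ 2 = ‖torusBasis.repr g k‖ ^ (2:ℝ≥0∞).toReal := by
    intro k
    rw [torusBasis.repr_apply_apply g k]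
    norm_num
    rw [congrFun torusBasis_coe.symm k]
  rw [tsum_congr h1, ← lp.norm_rpow_eq_tsum (by norm_num : (0:ℝ) < (2:ℝ≥0∞).toReal)]
  norm_num

/-- Substitution of a measure-preserving torus map inside a Fourier integral. -/
lemma int_shift (k : ℤ × ℤ) (F : Torus2 → ℂ) (hFm : AEStronglyMeasurable F (volume : Measure Torus2))
    (S Sinv : Torus2 → Torus2) (hS : MeasurePreserving S (volume : Measure Torus2) volume)
    (hSinv : Continuous Sinv) (hid : ∀ p, Sinv (S p) = p)
    (τ : ℤ × ℤ → ℤ × ℤ) (hτ : ∀ p, eT k (Sinv p) = eT (τ k) p) :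
    ∫ p : Torus2, conj (eT k p) * F (S p) = ∫ p : Torus2, conj (eT (τ k) p) * F p := by
  have hg : AEStronglyMeasurable (fun p => conj (eT k (Sinv p)) * F p) (volume : Measure Torus2) := by
    exact ((Complex.continuous_conj.comp ((eT k).continuous.comp hSinv)).aestronglyMeasurable).mul hFm
  calc ∫ p : Torus2, conj (eT k p) * F (S p)
      = ∫ p : Torus2, conj (eT k (Sinv (S p))) * F (S p) := by
        apply integral_congr_ae; filter_upwards with p; rw [hid p]
    _ = ∫ p : Torus2, conj (eT k (Sinv p)) * F p ∂(Measure.map S volume) := by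
        rw [integral_map hS.aemeasurable (by rwa [hS.map_eq])]
    _ = ∫ p : Torus2, conj (eT k (Sinv p)) * F p := by rw [hS.map_eq]
    _ = ∫ p : Torus2, conj (eT (τ k) p) * F p := by
        apply integral_congr_ae; filter_upwards with p; rw [hτ p]

end
end Mrg
end S4
section S5
namespace Mrg
noncomputable section

/-- max-norm of a frequency vector. -/
def Nm (k : ℤ × ℤ) : ℤ := max |k.1| |k.2|

/-- Edge weights for the tree-orientation certificate. -/
def w (k m : ℤ × ℤ) : ℝ :=
  if Nm m < Nm k then Real.sqrt 3 else if Nm k < Nm m then (Real.sqrt 3)⁻¹ else 1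

lemma s3_pos : (0:ℝ) < Real.sqrt 3 := Real.sqrt_pos.mpr (by norm_num)
lemma s3_sq : Real.sqrt 3 * Real.sqrt 3 = 3 := Real.mul_self_sqrt (by norm_num)
lemma s3_ge : (3:ℝ)/2 ≤ Real.sqrt 3 := by
  rw [show (3:ℝ)/2 = Real.sqrt ((3/2)^2) by rw [Real.sqrt_sq (by norm_num)]]
  exact Real.sqrt_le_sqrt (by norm_num)
lemma s3_ge1 : (1:ℝ) ≤ Real.sqrt 3 := le_trans (by norm_num) s3_ge
lemma s3_inv : (Real.sqrt 3)⁻¹ = Real.sqrt 3 / 3 := by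
  rw [eq_div_iff (by norm_num : (3:ℝ) ≠ 0), inv_mul_eq_div, div_eq_iff s3_pos.ne']
  exact s3_sq.symm
lemma s3_inv_le : (Real.sqrt 3)⁻¹ ≤ 1 := by
  rw [s3_inv]; nlinarith [s3_sq, s3_pos]

lemma w_pos (k m : ℤ × ℤ) : 0 < w k m := by
  unfold w
  split_ifs
  · exact s3_pos
  · exact inv_pos.mpr s3_pos
  · norm_num

lemma w_le_s3 (k m : ℤ × ℤ) : w k m ≤ Real.sqrt 3 := by
  unfold w
  split_ifs
  · exact le_refl _
  · linarith [s3_inv_le, s3_ge1]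
  · exact s3_ge1

lemma w_eq_small {k m : ℤ × ℤ} (h : Nm k < Nm m) : w k m = (Real.sqrt 3)⁻¹ := by
  unfold w
  rw [if_neg (by omega), if_pos h]

lemma w_le_one {k m : ℤ × ℤ} (h : Nm k ≤ Nm m) : w k m ≤ 1 := by
  unfold w
  rw [if_neg (by omega)]
  split_ifs
  · exact s3_inv_le
  · exact le_refl _

lemma w_refl (k : ℤ × ℤ) : w k k = 1 := by
  unfold w
  rw [if_neg (by omega), if_neg (by omega)]

lemma w_inv (k m : ℤ × ℤ) : (w k m)⁻¹ = w m k := by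
  unfold w
  rcases lt_trichotomy (Nm k) (Nm m) with h | h | h
  · rw [if_neg (by omega), if_pos h, if_pos h, inv_inv]
  · rw [if_neg (by omega), if_neg (by omega), if_neg (by omega), if_neg (by omega), inv_one]
  · rw [if_pos h, if_neg (by omega), if_pos h]

lemma Nm_lt_pair {x y u v : ℤ} : Nm (x, y) < Nm (u, v) ↔
    (|x| < |u| ∨ |x| < |v|) ∧ (|y| < |u| ∨ |y| < |v|) := by
  show max |x| |y| < max |u| |v| ↔ _
  rw [max_lt_iff, lt_max_iff, lt_max_iff]

lemma Nm_le_pair {x y u v : ℤ} : Nm (x, y) ≤ Nm (u, v) ↔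
    (|x| ≤ |u| ∨ |x| ≤ |v|) ∧ (|y| ≤ |u| ∨ |y| ≤ |v|) := by
  show max |x| |y| ≤ max |u| |v| ↔ _
  rw [max_le_iff, le_max_iff, le_max_iff]

/-- The budget inequality: the total outgoing weight at any nonzero frequency is at most `2√3`. -/
lemma budget (k : ℤ × ℤ) (hk : k ≠ 0) :
    w k (sA k) + w k (sA' k) + w k (sB k) + w k (sB' k) ≤ 2 * Real.sqrt 3 := by
  obtain ⟨x, y⟩ := k
  have hxy : ¬(x = 0 ∧ y = 0) := by
    intro h; exact hk (by simp [Prod.ext_iff, h.1, h.2])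
  have habs : ∀ a b : ℤ, |a| - |b| ≤ |a + b| := by
    intro a b
    have := abs_sub_abs_le_abs_sub a (-b)
    simpa [sub_neg_eq_add] using this
  have key2 : 2 + 2 * (Real.sqrt 3)⁻¹ ≤ 2 * Real.sqrt 3 := by
    rw [s3_inv]; nlinarith [s3_ge, s3_sq]
  have keyE : Real.sqrt 3 + (Real.sqrt 3)⁻¹ + (Real.sqrt 3)⁻¹ + (Real.sqrt 3)⁻¹
      = 2 * Real.sqrt 3 := by
    rw [s3_inv]; nlinarith [s3_sq]
  have hxnn := abs_nonneg x
  have hynn := abs_nonneg y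
  have h2x : |2 * x| = 2 * |x| := by rw [abs_mul]; norm_num
  have h2y : |2 * y| = 2 * |y| := by rw [abs_mul]; norm_num
  have h0 : |(0:ℤ)| = 0 := abs_zero
  have eA : sA (x, y) = (x, y + 2 * x) := rfl
  have eA' : sA' (x, y) = (x, y - 2 * x) := rfl
  have eB : sB (x, y) = (x + 2 * y, y) := rfl
  have eB' : sB' (x, y) = (x - 2 * y, y) := rfl
  rw [eA, eA', eB, eB']
  rcases eq_or_ne x 0 with rfl | hx
  · have hy : y ≠ 0 := fun h => hxy ⟨rfl, h⟩
    have hy' : 0 < |y| := abs_pos.mpr hy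
    have e1 : ((0:ℤ), y + 2 * 0) = ((0:ℤ), y) := by norm_num
    have e2 : ((0:ℤ), y - 2 * 0) = ((0:ℤ), y) := by norm_num
    rw [e1, e2, w_refl]
    have hNb : Nm (0, y) < Nm (0 + 2 * y, y) := by
      rw [Nm_lt_pair, zero_add]
      exact ⟨Or.inl (by omega), Or.inl (by omega)⟩
    have hNb' : Nm (0, y) < Nm (0 - 2 * y, y) := by
      have h2y' : |0 - 2 * y| = 2 * |y| := by rw [zero_sub, abs_neg]; exact h2y
      rw [Nm_lt_pair]
      exact ⟨Or.inl (by omega), Or.inl (by omega)⟩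
    rw [w_eq_small hNb, w_eq_small hNb']
    linarith [key2]
  rcases eq_or_ne y 0 with rfl | hy
  · have hx' : 0 < |x| := abs_pos.mpr hx
    have e1 : (x + 2 * 0, (0:ℤ)) = (x, (0:ℤ)) := by norm_num
    have e2 : (x - 2 * 0, (0:ℤ)) = (x, (0:ℤ)) := by norm_num
    rw [e1, e2, w_refl]
    have ha : |0 + 2 * x| = 2 * |x| := by rw [zero_add]; exact h2x
    have ha' : |0 - 2 * x| = 2 * |x| := by rw [zero_sub, abs_neg]; exact h2x
    have hNa : Nm (x, 0) < Nm (x, 0 + 2 * x) := by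
      rw [Nm_lt_pair]
      exact ⟨Or.inr (by omega), Or.inr (by omega)⟩
    have hNa' : Nm (x, 0) < Nm (x, 0 - 2 * x) := by
      rw [Nm_lt_pair]
      exact ⟨Or.inr (by omega), Or.inr (by omega)⟩
    rw [w_eq_small hNa, w_eq_small hNa']
    linarith [key2]
  have hx' : 0 < |x| := abs_pos.mpr hx
  have hy' : 0 < |y| := abs_pos.mpr hy
  rcases lt_trichotomy |x| |y| with hlt | heq | hgt
  · -- |x| < |y|
    have hb1 : |y| < |x + 2 * y| := by
      have h5 : |2 * y| - |x| ≤ |2 * y + x| := habs (2 * y) x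
      have h7 : |x + 2 * y| = |2 * y + x| := by rw [add_comm]
      omega
    have hb2 : |y| < |x - 2 * y| := by
      have h5 : |2 * y| - |x| ≤ |2 * y - x| := by
        have := habs (2 * y) (-x); simpa [sub_eq_add_neg] using this
      have h7 : |x - 2 * y| = |2 * y - x| := abs_sub_comm _ _
      omega
    have hNb : Nm (x, y) < Nm (x + 2 * y, y) := by
      rw [Nm_lt_pair]; exact ⟨Or.inl (by omega), Or.inl (by omega)⟩
    have hNb' : Nm (x, y) < Nm (x - 2 * y, y) := by
      rw [Nm_lt_pair]; exact ⟨Or.inl (by omega), Or.inl (by omega)⟩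
    have hdisj : Nm (x, y) < Nm (x, y + 2 * x) ∨ Nm (x, y) < Nm (x, y - 2 * x) := by
      have hOne : |y| < |y + 2 * x| ∨ |y| < |y - 2 * x| := by
        by_contra hc
        push_neg at hc
        obtain ⟨e1, e2⟩ := hc
        rcases abs_cases (y + 2*x) with ⟨h8, _⟩ | ⟨h8, _⟩ <;>
          rcases abs_cases (y - 2*x) with ⟨h9, _⟩ | ⟨h9, _⟩ <;>
          rcases abs_cases y with ⟨h10, _⟩ | ⟨h10, _⟩ <;>
          rcases abs_cases x with ⟨h11, _⟩ | ⟨h11, _⟩ <;> omega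
      rcases hOne with h | h
      · exact Or.inl (by rw [Nm_lt_pair]; exact ⟨Or.inr (by omega), Or.inr h⟩)
      · exact Or.inr (by rw [Nm_lt_pair]; exact ⟨Or.inr (by omega), Or.inr h⟩)
    have hsum : w (x,y) (x, y + 2*x) + w (x,y) (x, y - 2*x)
        ≤ Real.sqrt 3 + (Real.sqrt 3)⁻¹ := by
      rcases hdisj with h | h
      · rw [w_eq_small h]; linarith [w_le_s3 (x,y) (x, y - 2*x)]
      · rw [w_eq_small h]; linarith [w_le_s3 (x,y) (x, y + 2*x)]
    rw [w_eq_small hNb, w_eq_small hNb']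
    linarith [keyE]
  · -- |x| = |y|
    have hA : Nm (x, y) ≤ Nm (x, y + 2 * x) := by
      rw [Nm_le_pair]; exact ⟨Or.inl (le_refl _), Or.inl (by omega)⟩
    have hA' : Nm (x, y) ≤ Nm (x, y - 2 * x) := by
      rw [Nm_le_pair]; exact ⟨Or.inl (le_refl _), Or.inl (by omega)⟩
    have hB : Nm (x, y) ≤ Nm (x + 2 * y, y) := by
      rw [Nm_le_pair]; exact ⟨Or.inr (by omega), Or.inr (le_refl _)⟩
    have hB' : Nm (x, y) ≤ Nm (x - 2 * y, y) := by
      rw [Nm_le_pair]; exact ⟨Or.inr (by omega), Or.inr (le_refl _)⟩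
    have hdA : |x| < |y + 2 * x| ∨ |x| < |y - 2 * x| := by
      by_contra hc
      push_neg at hc
      obtain ⟨e1, e2⟩ := hc
      rcases abs_cases (y + 2*x) with ⟨h8, _⟩ | ⟨h8, _⟩ <;>
        rcases abs_cases (y - 2*x) with ⟨h9, _⟩ | ⟨h9, _⟩ <;>
        rcases abs_cases y with ⟨h10, _⟩ | ⟨h10, _⟩ <;>
        rcases abs_cases x with ⟨h11, _⟩ | ⟨h11, _⟩ <;> omega
    have hdB : |x| < |x + 2 * y| ∨ |x| < |x - 2 * y| := by
      by_contra hc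
      push_neg at hc
      obtain ⟨e1, e2⟩ := hc
      rcases abs_cases (x + 2*y) with ⟨h8, _⟩ | ⟨h8, _⟩ <;>
        rcases abs_cases (x - 2*y) with ⟨h9, _⟩ | ⟨h9, _⟩ <;>
        rcases abs_cases y with ⟨h10, _⟩ | ⟨h10, _⟩ <;>
        rcases abs_cases x with ⟨h11, _⟩ | ⟨h11, _⟩ <;> omega
    have hsA : w (x,y) (x, y + 2*x) + w (x,y) (x, y - 2*x) ≤ 1 + (Real.sqrt 3)⁻¹ := by
      rcases hdA with h | h
      · have hlt2 : Nm (x, y) < Nm (x, y + 2 * x) := by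
          rw [Nm_lt_pair]; exact ⟨Or.inr (by omega), Or.inr (by omega)⟩
        rw [w_eq_small hlt2]; linarith [w_le_one hA']
      · have hlt2 : Nm (x, y) < Nm (x, y - 2 * x) := by
          rw [Nm_lt_pair]; exact ⟨Or.inr (by omega), Or.inr (by omega)⟩
        rw [w_eq_small hlt2]; linarith [w_le_one hA]
    have hsB : w (x,y) (x + 2*y, y) + w (x,y) (x - 2*y, y) ≤ 1 + (Real.sqrt 3)⁻¹ := by
      rcases hdB with h | h
      · have hlt2 : Nm (x, y) < Nm (x + 2 * y, y) := by
          rw [Nm_lt_pair]; exact ⟨Or.inl (by omega), Or.inl (by omega)⟩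
        rw [w_eq_small hlt2]; linarith [w_le_one hB']
      · have hlt2 : Nm (x, y) < Nm (x - 2 * y, y) := by
          rw [Nm_lt_pair]; exact ⟨Or.inl (by omega), Or.inl (by omega)⟩
        rw [w_eq_small hlt2]; linarith [w_le_one hB]
    linarith [key2]
  · -- |y| < |x|
    have ha1 : |x| < |y + 2 * x| := by
      have h5 : |2 * x| - |y| ≤ |2 * x + y| := habs (2 * x) y
      have h7 : |y + 2 * x| = |2 * x + y| := by rw [add_comm]
      omega
    have ha2 : |x| < |y - 2 * x| := by
      have h5 : |2 * x| - |y| ≤ |2 * x - y| := by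
        have := habs (2 * x) (-y); simpa [sub_eq_add_neg] using this
      have h7 : |y - 2 * x| = |2 * x - y| := abs_sub_comm _ _
      omega
    have hNa : Nm (x, y) < Nm (x, y + 2 * x) := by
      rw [Nm_lt_pair]; exact ⟨Or.inr ha1, Or.inr (by omega)⟩
    have hNa' : Nm (x, y) < Nm (x, y - 2 * x) := by
      rw [Nm_lt_pair]; exact ⟨Or.inr ha2, Or.inr (by omega)⟩
    have hdisj : Nm (x, y) < Nm (x + 2 * y, y) ∨ Nm (x, y) < Nm (x - 2 * y, y) := by
      have hOne : |x| < |x + 2 * y| ∨ |x| < |x - 2 * y| := by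
        by_contra hc
        push_neg at hc
        obtain ⟨e1, e2⟩ := hc
        rcases abs_cases (x + 2*y) with ⟨h8, _⟩ | ⟨h8, _⟩ <;>
          rcases abs_cases (x - 2*y) with ⟨h9, _⟩ | ⟨h9, _⟩ <;>
          rcases abs_cases x with ⟨h10, _⟩ | ⟨h10, _⟩ <;>
          rcases abs_cases y with ⟨h11, _⟩ | ⟨h11, _⟩ <;> omega
      rcases hOne with h | h
      · exact Or.inl (by rw [Nm_lt_pair]; exact ⟨Or.inl h, Or.inl (by omega)⟩)
      · exact Or.inr (by rw [Nm_lt_pair]; exact ⟨Or.inl h, Or.inl (by omega)⟩)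
    have hsum : w (x,y) (x + 2*y, y) + w (x,y) (x - 2*y, y)
        ≤ Real.sqrt 3 + (Real.sqrt 3)⁻¹ := by
      rcases hdisj with h | h
      · rw [w_eq_small h]; linarith [w_le_s3 (x,y) (x - 2*y, y)]
      · rw [w_eq_small h]; linarith [w_le_s3 (x,y) (x + 2*y, y)]
    rw [w_eq_small hNa, w_eq_small hNa']
    linarith [keyE]

end
end Mrg
end S5
section S6
namespace Mrg
noncomputable section

lemma cs4 (u₁ u₂ u₃ u₄ : ℂ) (w₁ w₂ w₃ w₄ : ℝ)
    (h₁ : 0 < w₁) (h₂ : 0 < w₂) (h₃ : 0 < w₃) (h₄ : 0 < w₄) :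
    ‖u₁ + u₂ + u₃ + u₄‖ ^ 2 ≤ (w₁ + w₂ + w₃ + w₄) *
      (w₁⁻¹ * ‖u₁‖ ^ 2 + w₂⁻¹ * ‖u₂‖ ^ 2 + w₃⁻¹ * ‖u₃‖ ^ 2 + w₄⁻¹ * ‖u₄‖ ^ 2) := by
  have hn : ‖u₁ + u₂ + u₃ + u₄‖ ≤ ‖u₁‖ + ‖u₂‖ + ‖u₃‖ + ‖u₄‖ := by
    calc ‖u₁ + u₂ + u₃ + u₄‖ ≤ ‖u₁ + u₂ + u₃‖ + ‖u₄‖ := norm_add_le _ _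
      _ ≤ (‖u₁ + u₂‖ + ‖u₃‖) + ‖u₄‖ := by gcongr; exact norm_add_le _ _
      _ ≤ ((‖u₁‖ + ‖u₂‖) + ‖u₃‖) + ‖u₄‖ := by gcongr; exact norm_add_le _ _
  have hsq : ‖u₁ + u₂ + u₃ + u₄‖ ^ 2 ≤ (‖u₁‖ + ‖u₂‖ + ‖u₃‖ + ‖u₄‖) ^ 2 := by
    apply pow_le_pow_left₀ (norm_nonneg _) hn
  refine le_trans hsq ?_
  set x₁ := ‖u₁‖; set x₂ := ‖u₂‖; set x₃ := ‖u₃‖; set x₄ := ‖u₄‖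
  have key := Finset.sum_mul_sq_le_sq_mul_sq (Finset.univ : Finset (Fin 4))
    (fun i => Real.sqrt (![w₁, w₂, w₃, w₄] i))
    (fun i => (![x₁, x₂, x₃, x₄] i) / Real.sqrt (![w₁, w₂, w₃, w₄] i))
  simp only [Fin.sum_univ_four] at key
  simp only [Matrix.cons_val_zero, Matrix.cons_val_one, Matrix.head_cons,
    Matrix.cons_val_two, Matrix.tail_cons, Matrix.cons_val_three] at key
  have e1 : ∀ (c : ℝ) (z : ℝ), 0 < c → Real.sqrt c * (z / Real.sqrt c) = z := by
    intro c z hc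
    field_simp
  have e2 : ∀ c : ℝ, 0 < c → Real.sqrt c ^ 2 = c := fun c hc => Real.sq_sqrt hc.le
  have e3 : ∀ (c : ℝ) (z : ℝ), 0 < c → (z / Real.sqrt c) ^ 2 = c⁻¹ * z ^ 2 := by
    intro c z hc
    rw [div_pow, e2 c hc, inv_mul_eq_div]
  rw [e1 _ _ h₁, e1 _ _ h₂, e1 _ _ h₃, e1 _ _ h₄, e2 _ h₁, e2 _ h₂, e2 _ h₃, e2 _ h₄,
    e3 _ _ h₁, e3 _ _ h₂, e3 _ _ h₃, e3 _ _ h₄] at key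
  exact key

/-- `sA` as an equivalence of `ℤ × ℤ`. -/
def EA : (ℤ × ℤ) ≃ (ℤ × ℤ) where
  toFun := sA
  invFun := sA'
  left_inv := fun k => by simp only [sA, sA']; exact Prod.ext rfl (by ring)
  right_inv := fun k => by simp only [sA, sA']; exact Prod.ext rfl (by ring)

def EA' : (ℤ × ℤ) ≃ (ℤ × ℤ) where
  toFun := sA'
  invFun := sA
  left_inv := fun k => by simp only [sA, sA']; exact Prod.ext rfl (by ring)
  right_inv := fun k => by simp only [sA, sA']; exact Prod.ext rfl (by ring)

def EB : (ℤ × ℤ) ≃ (ℤ × ℤ) where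
  toFun := sB
  invFun := sB'
  left_inv := fun k => by simp only [sB, sB']; exact Prod.ext (by ring) rfl
  right_inv := fun k => by simp only [sB, sB']; exact Prod.ext (by ring) rfl

def EB' : (ℤ × ℤ) ≃ (ℤ × ℤ) where
  toFun := sB'
  invFun := sB
  left_inv := fun k => by simp only [sB, sB']; exact Prod.ext (by ring) rfl
  right_inv := fun k => by simp only [sB, sB']; exact Prod.ext (by ring) rfl

lemma sAA' (k : ℤ × ℤ) : sA (sA' k) = k := by
  simp only [sA, sA']; exact Prod.ext rfl (by ring)
lemma sA'A (k : ℤ × ℤ) : sA' (sA k) = k := by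
  simp only [sA, sA']; exact Prod.ext rfl (by ring)
lemma sBB' (k : ℤ × ℤ) : sB (sB' k) = k := by
  simp only [sB, sB']; exact Prod.ext (by ring) rfl
lemma sB'B (k : ℤ × ℤ) : sB' (sB k) = k := by
  simp only [sB, sB']; exact Prod.ext (by ring) rfl

lemma sA_zero : sA 0 = 0 := by simp [sA]
lemma sA'_zero : sA' 0 = 0 := by simp [sA']
lemma sB_zero : sB 0 = 0 := by simp [sB]
lemma sB'_zero : sB' 0 = 0 := by simp [sB']

end
end Mrg
end S6
section S7
open MeasureTheory
open scoped ComplexConjugate ENNReal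
namespace Mrg
noncomputable section

lemma contT1 : Continuous torusT1 := by
  unfold torusT1
  exact (continuous_fst.add ((continuous_zsmul 2).comp continuous_snd)).prodMk continuous_snd

lemma contT1inv : Continuous torusT1inv := by
  unfold torusT1inv
  exact (continuous_fst.sub ((continuous_zsmul 2).comp continuous_snd)).prodMk continuous_snd

lemma contT2 : Continuous torusT2 := by
  unfold torusT2
  exact continuous_fst.prodMk (((continuous_zsmul 2).comp continuous_fst).add continuous_snd)

lemma contT2inv : Continuous torusT2inv := by
  unfold torusT2inv
  exact continuous_fst.prodMk (continuous_snd.sub ((continuous_zsmul 2).comp continuous_fst))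

lemma T1inv_T1 (p : Torus2) : torusT1inv (torusT1 p) = p := by
  simp [torusT1, torusT1inv]
lemma T1_T1inv (p : Torus2) : torusT1 (torusT1inv p) = p := by
  simp [torusT1, torusT1inv]
lemma T2inv_T2 (p : Torus2) : torusT2inv (torusT2 p) = p := by
  simp [torusT2, torusT2inv]
lemma T2_T2inv (p : Torus2) : torusT2 (torusT2inv p) = p := by
  simp [torusT2, torusT2inv]

/-- norm squared of the `toLp` of (the complexification of) a real function is
the integral of its square. -/
lemma normsq_toLp (g : Torus2 → ℝ) (hg : MemLp (fun p => ((g p : ℝ) : ℂ)) 2 (volume : Measure Torus2)) :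
    ‖hg.toLp (fun p => ((g p : ℝ) : ℂ))‖ ^ 2 = ∫ p : Torus2, (g p) ^ 2 := by
  set G : Torus2 → ℂ := fun p => ((g p : ℝ) : ℂ)
  have h1 : (inner ℂ (hg.toLp G) (hg.toLp G) : ℂ) = ∫ p : Torus2, conj (G p) * G p := by
    rw [MeasureTheory.L2.inner_def]
    apply integral_congr_ae
    filter_upwards [hg.coeFn_toLp] with p h2
    rw [h2, RCLike.inner_apply']
  have h2 : (fun p : Torus2 => conj (G p) * G p) = fun p : Torus2 => (((g p) ^ 2 : ℝ) : ℂ) := by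
    funext p
    simp only [G, Complex.conj_ofReal]
    push_cast
    ring
  rw [h2] at h1
  have h4 : (∫ p : Torus2, (((g p) ^ 2 : ℝ) : ℂ)) = ((∫ p : Torus2, (g p) ^ 2 : ℝ) : ℂ) :=
    integral_ofReal (𝕜 := ℂ) (f := fun p : Torus2 => (g p) ^ 2)
  rw [h4] at h1
  have h3 : (inner ℂ (hg.toLp G) (hg.toLp G) : ℂ) = ((‖hg.toLp G‖ : ℂ)) ^ 2 :=
    inner_self_eq_norm_sq_to_K _
  rw [h3] at h1
  have := h1
  rw [show ((‖hg.toLp G‖ : ℂ)) ^ 2 = ((‖hg.toLp G‖ ^ 2 : ℝ) : ℂ) by push_cast; ring] at this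
  exact_mod_cast this

end
end Mrg
end S7

section S8
open MeasureTheory
open scoped ComplexConjugate ENNReal

/-- the Kesten spectral bound `√3/2` for the Margulis graphexon operator
on the zero-mean subspace `L²₀(𝕋², ν)`. -/
theorem stmt_9 (f : Torus2 → ℝ)
    (hf : MemLp f 2 (volume : Measure Torus2))
    (hmean : (∫ x : Torus2, f x) = 0) :
    Real.sqrt (∫ x : Torus2, (margulisG f x) ^ 2)
      ≤ (Real.sqrt 3 / 2) * Real.sqrt (∫ x : Torus2, (f x) ^ 2) := by
  classical
  set F : Torus2 → ℂ := fun p => ((f p : ℝ) : ℂ) with hFdef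
  have hF : MemLp F 2 (volume : Measure Torus2) := hf.ofReal
  have hF1 : MemLp (F ∘ torusT1) 2 (volume : Measure Torus2) := hF.comp_measurePreserving Mrg.mpT1
  have hF2 : MemLp (F ∘ torusT1inv) 2 (volume : Measure Torus2) := hF.comp_measurePreserving Mrg.mpT1inv
  have hF3 : MemLp (F ∘ torusT2) 2 (volume : Measure Torus2) := hF.comp_measurePreserving Mrg.mpT2
  have hF4 : MemLp (F ∘ torusT2inv) 2 (volume : Measure Torus2) := hF.comp_measurePreserving Mrg.mpT2inv
  set G : Torus2 → ℂ := fun p => ((margulisG f p : ℝ) : ℂ) with hGdef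
  have hGeq : G = fun p => (1/4 : ℂ) *
      ((F ∘ torusT1) p + (F ∘ torusT1inv) p + (F ∘ torusT2) p + (F ∘ torusT2inv) p) := by
    funext p
    simp only [hGdef, hFdef, Function.comp_apply, margulisG]
    push_cast
    ring
  have hG : MemLp G 2 (volume : Measure Torus2) := by
    rw [hGeq]
    exact ((((hF1.add hF2).add hF3).add hF4).const_mul _)
  set LF := hF.toLp F with hLF
  set LG := hG.toLp G with hLG
  set b : ℤ × ℤ → ℂ := fun k => (inner ℂ (Mrg.eL k) LF : ℂ) with hbdef
  have hbint : ∀ k, b k = ∫ p : Torus2, conj (Mrg.eT k p) * F p :=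
    fun k => Mrg.inner_eL_eq k F hF
  have hb0 : b 0 = 0 := by
    rw [hbint 0]
    have h1 : (fun p : Torus2 => conj (Mrg.eT 0 p) * F p) = F := by
      funext p
      simp [Mrg.eT_apply, fourier_zero]
    rw [h1]
    have h2 : (∫ p : Torus2, F p) = ((∫ x : Torus2, f x : ℝ) : ℂ) :=
      integral_ofReal (𝕜 := ℂ) (f := f)
    rw [h2, hmean]
    simp
  -- integrability helper
  have hint : ∀ (H : Torus2 → ℂ), MemLp H 2 (volume : Measure Torus2) →
      ∀ k, Integrable (fun p => conj (Mrg.eT k p) * H p) (volume : Measure Torus2) := by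
    intro H hH k
    exact (hH.integrable (by norm_num)).bdd_mul
      ((Complex.continuous_conj.comp (Mrg.eT k).continuous).aestronglyMeasurable)
      (c := 1) (Filter.Eventually.of_forall fun p => by rw [RCLike.norm_conj, Mrg.norm_eT])
  -- coefficient identity
  have hshift : ∀ k, (inner ℂ (Mrg.eL k) LG : ℂ)
      = (1/4 : ℂ) * (b (Mrg.sA' k) + b (Mrg.sA k) + b (Mrg.sB' k) + b (Mrg.sB k)) := by
    intro k
    rw [hLG, Mrg.inner_eL_eq k G hG]
    have h1 : (fun p : Torus2 => conj (Mrg.eT k p) * G p)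
        = fun p : Torus2 => (1/4 : ℂ) * (conj (Mrg.eT k p) * (F ∘ torusT1) p
            + conj (Mrg.eT k p) * (F ∘ torusT1inv) p
            + conj (Mrg.eT k p) * (F ∘ torusT2) p
            + conj (Mrg.eT k p) * (F ∘ torusT2inv) p) := by
      funext p
      rw [hGeq]
      simp only [Function.comp_apply]
      ring
    rw [h1, integral_const_mul]
    have i1 : Integrable (fun p : Torus2 => conj (Mrg.eT k p) * (F ∘ torusT1) p)
        (volume : Measure Torus2) := hint (F ∘ torusT1) hF1 k
    have i2 : Integrable (fun p : Torus2 => conj (Mrg.eT k p) * (F ∘ torusT1inv) p)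
        (volume : Measure Torus2) := hint (F ∘ torusT1inv) hF2 k
    have i3 : Integrable (fun p : Torus2 => conj (Mrg.eT k p) * (F ∘ torusT2) p)
        (volume : Measure Torus2) := hint (F ∘ torusT2) hF3 k
    have i4 : Integrable (fun p : Torus2 => conj (Mrg.eT k p) * (F ∘ torusT2inv) p)
        (volume : Measure Torus2) := hint (F ∘ torusT2inv) hF4 k
    have i12 : Integrable (fun p : Torus2 => conj (Mrg.eT k p) * (F ∘ torusT1) p
        + conj (Mrg.eT k p) * (F ∘ torusT1inv) p) (volume : Measure Torus2) := i1.add i2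
    have i123 : Integrable (fun p : Torus2 => conj (Mrg.eT k p) * (F ∘ torusT1) p
        + conj (Mrg.eT k p) * (F ∘ torusT1inv) p
        + conj (Mrg.eT k p) * (F ∘ torusT2) p) (volume : Measure Torus2) := i12.add i3
    rw [integral_add i123 i4, integral_add i12 i3, integral_add i1 i2]
    have e1 : (∫ p : Torus2, conj (Mrg.eT k p) * (F ∘ torusT1) p) = b (Mrg.sA' k) := by
      rw [show (fun p : Torus2 => conj (Mrg.eT k p) * (F ∘ torusT1) p)
          = fun p : Torus2 => conj (Mrg.eT k p) * F (torusT1 p) from rfl]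
      rw [Mrg.int_shift k F hF.1 torusT1 torusT1inv Mrg.mpT1 Mrg.contT1inv Mrg.T1inv_T1
        Mrg.sA' (Mrg.eT_T1inv k), ← hbint]
    have e2 : (∫ p : Torus2, conj (Mrg.eT k p) * (F ∘ torusT1inv) p) = b (Mrg.sA k) := by
      rw [show (fun p : Torus2 => conj (Mrg.eT k p) * (F ∘ torusT1inv) p)
          = fun p : Torus2 => conj (Mrg.eT k p) * F (torusT1inv p) from rfl]
      rw [Mrg.int_shift k F hF.1 torusT1inv torusT1 Mrg.mpT1inv Mrg.contT1 Mrg.T1_T1inv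
        Mrg.sA (Mrg.eT_T1 k), ← hbint]
    have e3 : (∫ p : Torus2, conj (Mrg.eT k p) * (F ∘ torusT2) p) = b (Mrg.sB' k) := by
      rw [show (fun p : Torus2 => conj (Mrg.eT k p) * (F ∘ torusT2) p)
          = fun p : Torus2 => conj (Mrg.eT k p) * F (torusT2 p) from rfl]
      rw [Mrg.int_shift k F hF.1 torusT2 torusT2inv Mrg.mpT2 Mrg.contT2inv Mrg.T2inv_T2
        Mrg.sB' (Mrg.eT_T2inv k), ← hbint]
    have e4 : (∫ p : Torus2, conj (Mrg.eT k p) * (F ∘ torusT2inv) p) = b (Mrg.sB k) := by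
      rw [show (fun p : Torus2 => conj (Mrg.eT k p) * (F ∘ torusT2inv) p)
          = fun p : Torus2 => conj (Mrg.eT k p) * F (torusT2inv p) from rfl]
      rw [Mrg.int_shift k F hF.1 torusT2inv torusT2 Mrg.mpT2inv Mrg.contT2 Mrg.T2_T2inv
        Mrg.sB (Mrg.eT_T2 k), ← hbint]
    rw [e1, e2, e3, e4]
  -- Parseval facts
  have hPb : Summable (fun k : ℤ × ℤ => ‖b k‖ ^ 2) := Mrg.parseval_summable LF
  have hPbe : ∑' k : ℤ × ℤ, ‖b k‖ ^ 2 = ‖LF‖ ^ 2 := Mrg.parseval_eq LF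
  have hPG : Summable (fun k : ℤ × ℤ => ‖(inner ℂ (Mrg.eL k) LG : ℂ)‖ ^ 2) := Mrg.parseval_summable LG
  have hPGe : ∑' k : ℤ × ℤ, ‖(inner ℂ (Mrg.eL k) LG : ℂ)‖ ^ 2 = ‖LG‖ ^ 2 := Mrg.parseval_eq LG
  set R : ℤ × ℤ → ℝ := fun k =>
      (Mrg.w k (Mrg.sA' k))⁻¹ * ‖b (Mrg.sA' k)‖ ^ 2
    + (Mrg.w k (Mrg.sA k))⁻¹ * ‖b (Mrg.sA k)‖ ^ 2
    + (Mrg.w k (Mrg.sB' k))⁻¹ * ‖b (Mrg.sB' k)‖ ^ 2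
    + (Mrg.w k (Mrg.sB k))⁻¹ * ‖b (Mrg.sB k)‖ ^ 2 with hRdef
  have hR0 : ∀ k, 0 ≤ R k := by
    intro k
    have := Mrg.w_pos
    refine add_nonneg (add_nonneg (add_nonneg ?_ ?_) ?_) ?_ <;>
      exact mul_nonneg (inv_nonneg.mpr (Mrg.w_pos _ _).le) (sq_nonneg _)
  -- pointwise key bound
  have hkey : ∀ k, ‖(inner ℂ (Mrg.eL k) LG : ℂ)‖ ^ 2 ≤ (Real.sqrt 3 / 8) * R k := by
    intro k
    rw [hshift k, norm_mul, mul_pow]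
    have hc : ‖(1/4 : ℂ)‖ ^ 2 = 1/16 := by norm_num
    rw [hc]
    rcases eq_or_ne k 0 with rfl | hk
    · simp only [hRdef, Mrg.sA_zero, Mrg.sA'_zero, Mrg.sB_zero, Mrg.sB'_zero, hb0]
      simp
    · have hcs := Mrg.cs4 (b (Mrg.sA' k)) (b (Mrg.sA k)) (b (Mrg.sB' k)) (b (Mrg.sB k))
        (Mrg.w k (Mrg.sA' k)) (Mrg.w k (Mrg.sA k)) (Mrg.w k (Mrg.sB' k)) (Mrg.w k (Mrg.sB k))
        (Mrg.w_pos _ _) (Mrg.w_pos _ _) (Mrg.w_pos _ _) (Mrg.w_pos _ _)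
      have hbud := Mrg.budget k hk
      have h5 : ‖b (Mrg.sA' k) + b (Mrg.sA k) + b (Mrg.sB' k) + b (Mrg.sB k)‖ ^ 2
          ≤ (2 * Real.sqrt 3) * R k := by
        refine le_trans hcs (mul_le_mul_of_nonneg_right (by linarith) (hR0 k))
      calc (1/16 : ℝ) * ‖b (Mrg.sA' k) + b (Mrg.sA k) + b (Mrg.sB' k) + b (Mrg.sB k)‖ ^ 2
          ≤ (1/16) * ((2 * Real.sqrt 3) * R k) :=
            mul_le_mul_of_nonneg_left h5 (by norm_num)
        _ = (Real.sqrt 3 / 8) * R k := by ring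
  -- summability of the R pieces
  have hwinvle : ∀ (k m : ℤ × ℤ), (Mrg.w k m)⁻¹ ≤ Real.sqrt 3 := fun k m => by
    rw [Mrg.w_inv]; exact Mrg.w_le_s3 m k
  have hsum1 : Summable (fun k => (Mrg.w k (Mrg.sA' k))⁻¹ * ‖b (Mrg.sA' k)‖ ^ 2) := by
    refine Summable.of_nonneg_of_le
      (fun k => mul_nonneg (inv_nonneg.mpr (Mrg.w_pos _ _).le) (sq_nonneg _))
      (fun k => mul_le_mul_of_nonneg_right (hwinvle _ _) (sq_nonneg _)) ?_
    exact ((Mrg.EA'.summable_iff (f := fun m => ‖b m‖ ^ 2)).mpr hPb).mul_left (Real.sqrt 3)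
  have hsum2 : Summable (fun k => (Mrg.w k (Mrg.sA k))⁻¹ * ‖b (Mrg.sA k)‖ ^ 2) := by
    refine Summable.of_nonneg_of_le
      (fun k => mul_nonneg (inv_nonneg.mpr (Mrg.w_pos _ _).le) (sq_nonneg _))
      (fun k => mul_le_mul_of_nonneg_right (hwinvle _ _) (sq_nonneg _)) ?_
    exact ((Mrg.EA.summable_iff (f := fun m => ‖b m‖ ^ 2)).mpr hPb).mul_left (Real.sqrt 3)
  have hsum3 : Summable (fun k => (Mrg.w k (Mrg.sB' k))⁻¹ * ‖b (Mrg.sB' k)‖ ^ 2) := by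
    refine Summable.of_nonneg_of_le
      (fun k => mul_nonneg (inv_nonneg.mpr (Mrg.w_pos _ _).le) (sq_nonneg _))
      (fun k => mul_le_mul_of_nonneg_right (hwinvle _ _) (sq_nonneg _)) ?_
    exact ((Mrg.EB'.summable_iff (f := fun m => ‖b m‖ ^ 2)).mpr hPb).mul_left (Real.sqrt 3)
  have hsum4 : Summable (fun k => (Mrg.w k (Mrg.sB k))⁻¹ * ‖b (Mrg.sB k)‖ ^ 2) := by
    refine Summable.of_nonneg_of_le
      (fun k => mul_nonneg (inv_nonneg.mpr (Mrg.w_pos _ _).le) (sq_nonneg _))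
      (fun k => mul_le_mul_of_nonneg_right (hwinvle _ _) (sq_nonneg _)) ?_
    exact ((Mrg.EB.summable_iff (f := fun m => ‖b m‖ ^ 2)).mpr hPb).mul_left (Real.sqrt 3)
  have hsumR : Summable R := ((hsum1.add hsum2).add hsum3).add hsum4
  -- the reverse-weight summables
  have hsum1' : Summable (fun m => Mrg.w m (Mrg.sA m) * ‖b m‖ ^ 2) := by
    refine Summable.of_nonneg_of_le
      (fun m => mul_nonneg (Mrg.w_pos _ _).le (sq_nonneg _))
      (fun m => mul_le_mul_of_nonneg_right (Mrg.w_le_s3 _ _) (sq_nonneg _)) ?_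
    exact hPb.mul_left (Real.sqrt 3)
  have hsum2' : Summable (fun m => Mrg.w m (Mrg.sA' m) * ‖b m‖ ^ 2) := by
    refine Summable.of_nonneg_of_le
      (fun m => mul_nonneg (Mrg.w_pos _ _).le (sq_nonneg _))
      (fun m => mul_le_mul_of_nonneg_right (Mrg.w_le_s3 _ _) (sq_nonneg _)) ?_
    exact hPb.mul_left (Real.sqrt 3)
  have hsum3' : Summable (fun m => Mrg.w m (Mrg.sB m) * ‖b m‖ ^ 2) := by
    refine Summable.of_nonneg_of_le
      (fun m => mul_nonneg (Mrg.w_pos _ _).le (sq_nonneg _))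
      (fun m => mul_le_mul_of_nonneg_right (Mrg.w_le_s3 _ _) (sq_nonneg _)) ?_
    exact hPb.mul_left (Real.sqrt 3)
  have hsum4' : Summable (fun m => Mrg.w m (Mrg.sB' m) * ‖b m‖ ^ 2) := by
    refine Summable.of_nonneg_of_le
      (fun m => mul_nonneg (Mrg.w_pos _ _).le (sq_nonneg _))
      (fun m => mul_le_mul_of_nonneg_right (Mrg.w_le_s3 _ _) (sq_nonneg _)) ?_
    exact hPb.mul_left (Real.sqrt 3)
  -- reindexing identities
  have t1 : ∑' k, (Mrg.w k (Mrg.sA' k))⁻¹ * ‖b (Mrg.sA' k)‖ ^ 2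
      = ∑' m, Mrg.w m (Mrg.sA m) * ‖b m‖ ^ 2 := by
    have e : ∀ k, (Mrg.w k (Mrg.sA' k))⁻¹ * ‖b (Mrg.sA' k)‖ ^ 2
        = Mrg.w (Mrg.EA' k) (Mrg.sA (Mrg.EA' k)) * ‖b (Mrg.EA' k)‖ ^ 2 := by
      intro k
      have h1 : Mrg.EA' k = Mrg.sA' k := rfl
      rw [h1, Mrg.w_inv, Mrg.sAA' k]
    rw [tsum_congr e]
    exact Mrg.EA'.tsum_eq (fun m => Mrg.w m (Mrg.sA m) * ‖b m‖ ^ 2)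
  have t2 : ∑' k, (Mrg.w k (Mrg.sA k))⁻¹ * ‖b (Mrg.sA k)‖ ^ 2
      = ∑' m, Mrg.w m (Mrg.sA' m) * ‖b m‖ ^ 2 := by
    have e : ∀ k, (Mrg.w k (Mrg.sA k))⁻¹ * ‖b (Mrg.sA k)‖ ^ 2
        = Mrg.w (Mrg.EA k) (Mrg.sA' (Mrg.EA k)) * ‖b (Mrg.EA k)‖ ^ 2 := by
      intro k
      have h1 : Mrg.EA k = Mrg.sA k := rfl
      rw [h1, Mrg.w_inv, Mrg.sA'A k]
    rw [tsum_congr e]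
    exact Mrg.EA.tsum_eq (fun m => Mrg.w m (Mrg.sA' m) * ‖b m‖ ^ 2)
  have t3 : ∑' k, (Mrg.w k (Mrg.sB' k))⁻¹ * ‖b (Mrg.sB' k)‖ ^ 2
      = ∑' m, Mrg.w m (Mrg.sB m) * ‖b m‖ ^ 2 := by
    have e : ∀ k, (Mrg.w k (Mrg.sB' k))⁻¹ * ‖b (Mrg.sB' k)‖ ^ 2
        = Mrg.w (Mrg.EB' k) (Mrg.sB (Mrg.EB' k)) * ‖b (Mrg.EB' k)‖ ^ 2 := by
      intro k
      have h1 : Mrg.EB' k = Mrg.sB' k := rfl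
      rw [h1, Mrg.w_inv, Mrg.sBB' k]
    rw [tsum_congr e]
    exact Mrg.EB'.tsum_eq (fun m => Mrg.w m (Mrg.sB m) * ‖b m‖ ^ 2)
  have t4 : ∑' k, (Mrg.w k (Mrg.sB k))⁻¹ * ‖b (Mrg.sB k)‖ ^ 2
      = ∑' m, Mrg.w m (Mrg.sB' m) * ‖b m‖ ^ 2 := by
    have e : ∀ k, (Mrg.w k (Mrg.sB k))⁻¹ * ‖b (Mrg.sB k)‖ ^ 2
        = Mrg.w (Mrg.EB k) (Mrg.sB' (Mrg.EB k)) * ‖b (Mrg.EB k)‖ ^ 2 := by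
      intro k
      have h1 : Mrg.EB k = Mrg.sB k := rfl
      rw [h1, Mrg.w_inv, Mrg.sB'B k]
    rw [tsum_congr e]
    exact Mrg.EB.tsum_eq (fun m => Mrg.w m (Mrg.sB' m) * ‖b m‖ ^ 2)
  have htR : ∑' k, R k = ∑' m, (Mrg.w m (Mrg.sA m) + Mrg.w m (Mrg.sA' m)
      + Mrg.w m (Mrg.sB m) + Mrg.w m (Mrg.sB' m)) * ‖b m‖ ^ 2 := by
    calc ∑' k, R k
        = ∑' m, Mrg.w m (Mrg.sA m) * ‖b m‖ ^ 2 + ∑' m, Mrg.w m (Mrg.sA' m) * ‖b m‖ ^ 2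
          + ∑' m, Mrg.w m (Mrg.sB m) * ‖b m‖ ^ 2 + ∑' m, Mrg.w m (Mrg.sB' m) * ‖b m‖ ^ 2 := by
          rw [hRdef]
          rw [Summable.tsum_add ((hsum1.add hsum2).add hsum3) hsum4,
            Summable.tsum_add (hsum1.add hsum2) hsum3, Summable.tsum_add hsum1 hsum2, t1, t2, t3, t4]
      _ = _ := by
          rw [← Summable.tsum_add hsum1' hsum2', ← Summable.tsum_add (hsum1'.add hsum2') hsum3',
            ← Summable.tsum_add ((hsum1'.add hsum2').add hsum3') hsum4']
          exact tsum_congr fun m => by ring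
  have hDt : ∑' m, (Mrg.w m (Mrg.sA m) + Mrg.w m (Mrg.sA' m)
      + Mrg.w m (Mrg.sB m) + Mrg.w m (Mrg.sB' m)) * ‖b m‖ ^ 2
      ≤ 2 * Real.sqrt 3 * ‖LF‖ ^ 2 := by
    have hptw : ∀ m, (Mrg.w m (Mrg.sA m) + Mrg.w m (Mrg.sA' m)
        + Mrg.w m (Mrg.sB m) + Mrg.w m (Mrg.sB' m)) * ‖b m‖ ^ 2
        ≤ 2 * Real.sqrt 3 * ‖b m‖ ^ 2 := by
      intro m
      rcases eq_or_ne m 0 with rfl | hm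
      · rw [hb0]
        simp
      · exact mul_le_mul_of_nonneg_right (Mrg.budget m hm) (sq_nonneg _)
    have hsl : Summable (fun m => (Mrg.w m (Mrg.sA m) + Mrg.w m (Mrg.sA' m)
        + Mrg.w m (Mrg.sB m) + Mrg.w m (Mrg.sB' m)) * ‖b m‖ ^ 2) := by
      have : (fun m => (Mrg.w m (Mrg.sA m) + Mrg.w m (Mrg.sA' m)
          + Mrg.w m (Mrg.sB m) + Mrg.w m (Mrg.sB' m)) * ‖b m‖ ^ 2)
          = fun m => Mrg.w m (Mrg.sA m) * ‖b m‖ ^ 2 + Mrg.w m (Mrg.sA' m) * ‖b m‖ ^ 2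
            + Mrg.w m (Mrg.sB m) * ‖b m‖ ^ 2 + Mrg.w m (Mrg.sB' m) * ‖b m‖ ^ 2 := by
        funext m; ring
      rw [this]
      exact ((hsum1'.add hsum2').add hsum3').add hsum4'
    calc ∑' m, (Mrg.w m (Mrg.sA m) + Mrg.w m (Mrg.sA' m)
        + Mrg.w m (Mrg.sB m) + Mrg.w m (Mrg.sB' m)) * ‖b m‖ ^ 2
        ≤ ∑' m, 2 * Real.sqrt 3 * ‖b m‖ ^ 2 :=
          Summable.tsum_le_tsum hptw hsl (hPb.mul_left _)
      _ = 2 * Real.sqrt 3 * ∑' m, ‖b m‖ ^ 2 := tsum_mul_left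
      _ = 2 * Real.sqrt 3 * ‖LF‖ ^ 2 := by rw [hPbe]
  have hfinal : ‖LG‖ ^ 2 ≤ 3/4 * ‖LF‖ ^ 2 := by
    have hc1 : ‖LG‖ ^ 2 ≤ (Real.sqrt 3 / 8) * (2 * Real.sqrt 3 * ‖LF‖ ^ 2) := by
      calc ‖LG‖ ^ 2 = ∑' k : ℤ × ℤ, ‖(inner ℂ (Mrg.eL k) LG : ℂ)‖ ^ 2 := hPGe.symm
        _ ≤ ∑' k, (Real.sqrt 3 / 8) * R k := Summable.tsum_le_tsum hkey hPG (hsumR.mul_left _)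
        _ = (Real.sqrt 3 / 8) * ∑' k, R k := tsum_mul_left
        _ = (Real.sqrt 3 / 8) * ∑' m, (Mrg.w m (Mrg.sA m) + Mrg.w m (Mrg.sA' m)
            + Mrg.w m (Mrg.sB m) + Mrg.w m (Mrg.sB' m)) * ‖b m‖ ^ 2 := by rw [htR]
        _ ≤ (Real.sqrt 3 / 8) * (2 * Real.sqrt 3 * ‖LF‖ ^ 2) := by
            exact mul_le_mul_of_nonneg_left hDt (by positivity)
    have hc2 : (Real.sqrt 3 / 8) * (2 * Real.sqrt 3 * ‖LF‖ ^ 2)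
        = (Real.sqrt 3 * Real.sqrt 3) / 4 * ‖LF‖ ^ 2 := by ring
    rw [hc2, Mrg.s3_sq] at hc1
    linarith
  -- wrap up
  have hIG : (∫ x : Torus2, (margulisG f x) ^ 2) = ‖LG‖ ^ 2 :=
    (Mrg.normsq_toLp (margulisG f) hG).symm
  have hIF : (∫ x : Torus2, (f x) ^ 2) = ‖LF‖ ^ 2 :=
    (Mrg.normsq_toLp f hF).symm
  rw [hIG, hIF, Real.sqrt_sq (norm_nonneg LG), Real.sqrt_sq (norm_nonneg LF)]
  have h6 : ‖LG‖ ^ 2 ≤ (Real.sqrt 3 / 2 * ‖LF‖) ^ 2 := by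
    have : (Real.sqrt 3 / 2 * ‖LF‖) ^ 2 = (Real.sqrt 3 * Real.sqrt 3) / 4 * ‖LF‖ ^ 2 := by ring
    rw [this, Mrg.s3_sq]
    linarith
  calc ‖LG‖ = Real.sqrt (‖LG‖ ^ 2) := (Real.sqrt_sq (norm_nonneg _)).symm
    _ ≤ Real.sqrt ((Real.sqrt 3 / 2 * ‖LF‖) ^ 2) := Real.sqrt_le_sqrt h6
    _ = Real.sqrt 3 / 2 * ‖LF‖ := Real.sqrt_sq (by positivity)


end S8
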